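/- (Elias bound for b-symbol distance) Let r = 1 - q^{-b}, and let w be an integer with w ≤ rn and w² - 2rnw + rnd > 0. Then A_b(n,d,q) ≤ (rnd / (w² - 2rnw + rnd)) · q^{bn} / (Σ_{i=0}^{w} C(n,i)(q^b-1)^i). -/

import Mathlib

open Finset

/-- Cyclic coordinate access: `cget z k` is the coordinate `z_k`, indices taken mod `n`. -/
def cget {Fq : Type*} [Zero Fq] {n : ℕ} (y : Fin n → Fq) (k : ℕ) : Fq :=
  if h : n = 0 then 0 else y ⟨k % n, Nat.mod_lt k (Nat.pos_of_ne_zero h)⟩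

/-- The `b`-symbol weight of a vector `y ∈ Fq^n`. -/
def wtb {Fq : Type*} [Zero Fq] [DecidableEq Fq] {n : ℕ} (b : ℕ) (y : Fin n → Fq) : ℕ :=
  ((Finset.range n).filter fun i => ∃ j : Fin b, cget y (i + j) ≠ 0).card

/-- The `b`-symbol distance on `Fq^n`. -/
def db {Fq : Type*} [Field Fq] [DecidableEq Fq] {n : ℕ} (b : ℕ) (x y : Fin n → Fq) : ℕ :=
  wtb b (x - y)


/-- `Asize Fq n b d` : the largest size of a code in `Fq^n` with minimum `b`-symbol
distance at least `d`. -/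
noncomputable def Asize (Fq : Type*) [Field Fq] [Fintype Fq] [DecidableEq Fq] (n b d : ℕ) : ℕ :=
  sSup {M | ∃ C : Finset (Fin n → Fq),
    (∀ x ∈ C, ∀ y ∈ C, x ≠ y → d ≤ db b x y) ∧ C.card = M}

section Aux

variable {F : Type*} [Fintype F] [DecidableEq F]

def hamd {n : ℕ} (x y : Fin n → F) : ℕ := (univ.filter fun i => x i ≠ y i).card

lemma card_fiber {n : ℕ} (z : Fin n → F) (s : Finset (Fin n)) :
    (univ.filter fun x : Fin n → F => univ.filter (fun j => x j ≠ z j) = s).card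
      = (Fintype.card F - 1) ^ s.card := by
  have e1 : ∀ x : Fin n → F,
      (univ.filter (fun j => x j ≠ z j) = s) ↔ ∀ j, (x j ≠ z j ↔ j ∈ s) := by
    intro x; rw [Finset.ext_iff]; simp
  have c1 : (univ.filter fun x : Fin n → F => univ.filter (fun j => x j ≠ z j) = s).card
      = Fintype.card (∀ j : Fin n, {b : F // b ≠ z j ↔ j ∈ s}) := by
    rw [← Fintype.card_subtype]
    exact Fintype.card_congr ((Equiv.subtypeEquivRight e1).trans (Equiv.subtypePiEquivPi (p := fun (j : Fin n) (b : F) => b ≠ z j ↔ j ∈ s)))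
  rw [c1, Fintype.card_pi]
  have e2 : ∀ j : Fin n, Fintype.card {b : F // b ≠ z j ↔ j ∈ s}
      = if j ∈ s then Fintype.card F - 1 else 1 := by
    intro j
    by_cases h : j ∈ s
    · rw [if_pos h, Fintype.card_congr (Equiv.subtypeEquivRight (q := fun b => b ≠ z j)
        (by simp [h]))]
      rw [Fintype.card_subtype_compl, Fintype.card_subtype_eq]
    · rw [if_neg h, Fintype.card_congr (Equiv.subtypeEquivRight (q := fun b => b = z j)
        (by simp [h]))]
      exact Fintype.card_subtype_eq _
  rw [Finset.prod_congr rfl (fun j _ => e2 j), Finset.prod_ite_mem, univ_inter,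
    Finset.prod_const]

lemma card_sphere {n : ℕ} (z : Fin n → F) (i : ℕ) :
    (univ.filter fun x : Fin n → F => hamd x z = i).card
      = n.choose i * (Fintype.card F - 1) ^ i := by
  rw [Finset.card_eq_sum_card_fiberwise
    (f := fun x : Fin n → F => univ.filter (fun j => x j ≠ z j))
    (t := powersetCard i univ)
    (fun x hx => by
      rw [Finset.mem_coe, mem_powersetCard]
      exact ⟨subset_univ _, (mem_filter.mp hx).2⟩)]
  have : ∀ s ∈ powersetCard i univ,
      ((univ.filter fun x : Fin n → F => hamd x z = i).filter
        (fun x => univ.filter (fun j => x j ≠ z j) = s)).card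
      = (Fintype.card F - 1) ^ i := by
    intro s hs
    have hsc : s.card = i := (mem_powersetCard.mp hs).2
    rw [Finset.filter_filter]
    have : ∀ x : Fin n → F,
        (hamd x z = i ∧ univ.filter (fun j => x j ≠ z j) = s)
        ↔ univ.filter (fun j => x j ≠ z j) = s := by
      intro x
      constructor
      · exact fun h => h.2
      · intro h; exact ⟨by rw [hamd, h, hsc], h⟩
    rw [Finset.filter_congr (fun x _ => this x), card_fiber, hsc]
  rw [Finset.sum_congr rfl this, Finset.sum_const, Finset.card_powersetCard,
    Finset.card_univ, Fintype.card_fin, smul_eq_mul]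

lemma card_ball {n : ℕ} (z : Fin n → F) (w : ℕ) :
    (univ.filter fun x : Fin n → F => hamd x z ≤ w).card
      = ∑ i ∈ range (w + 1), n.choose i * (Fintype.card F - 1) ^ i := by
  rw [Finset.card_eq_sum_card_fiberwise (f := fun x : Fin n → F => hamd x z)
    (t := range (w + 1))
    (fun x hx => by rw [Finset.mem_coe, mem_range]; exact Nat.lt_succ_of_le (mem_filter.mp hx).2)]
  refine Finset.sum_congr rfl fun i hi => ?_
  rw [Finset.filter_filter]
  rw [Finset.filter_congr (fun x _ => by
    constructor
    · exact fun h => h.2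
    · intro h; exact ⟨h ▸ Nat.lt_succ_iff.mp (mem_range.mp hi), h⟩)]
  exact card_sphere z i

lemma hamd_eq_sum {n : ℕ} (x y : Fin n → F) :
    hamd x y = ∑ i : Fin n, if x i ≠ y i then 1 else 0 := Finset.card_filter _ _

set_option maxHeartbeats 1000000 in
lemma elias_core {n dd w : ℕ}
    (hn : 0 < n) (hQ : 2 ≤ Fintype.card F)
    (S : Finset (Fin n → F)) (z : Fin n → F)
    (hball : ∀ x ∈ S, hamd x z ≤ w)
    (hdist : ∀ x ∈ S, ∀ y ∈ S, x ≠ y → dd ≤ hamd x y)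
    (hw : (w : ℝ) ≤ (1 - ((Fintype.card F : ℝ))⁻¹) * n)
    (hE : 0 ≤ (w:ℝ)^2 - 2*((1 - (Fintype.card F:ℝ)⁻¹)*n)*w
        + ((1 - (Fintype.card F:ℝ)⁻¹)*n)*dd) :
    (S.card : ℝ) * ((w:ℝ)^2 - 2*((1 - (Fintype.card F:ℝ)⁻¹)*n)*w
        + ((1 - (Fintype.card F:ℝ)⁻¹)*n)*dd)
      ≤ ((1 - (Fintype.card F:ℝ)⁻¹)*n) * dd := by
  classical
  have hQ2 : (2:ℝ) ≤ (Fintype.card F : ℝ) := by exact_mod_cast hQ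
  set Q : ℝ := (Fintype.card F : ℝ) with hQdef
  have hQ1 : (1:ℝ) < Q := by linarith
  set r : ℝ := 1 - Q⁻¹ with hrdef
  have hrpos : 0 < r := by
    have : Q⁻¹ < 1 := inv_lt_one_of_one_lt₀ hQ1
    simp only [hrdef]; linarith
  have hn' : (1:ℝ) ≤ n := by exact_mod_cast hn
  have hρpos : 0 < r * n := by positivity
  have hw0 : (0:ℝ) ≤ w := Nat.cast_nonneg w
  set c : ℝ := Q / (Q - 1) with hcdef
  have hQm1 : (0:ℝ) < Q - 1 := by linarith
  have hcpos : 0 < c := by positivity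
  have hrc : r * c = 1 := by
    simp only [hrdef, hcdef]; field_simp
  have hcw : c * w ≤ n := by
    have h1 : c * (w:ℝ) ≤ c * (r * n) := mul_le_mul_of_nonneg_left hw hcpos.le
    have h2 : c * (r * n) = (n:ℝ) := by rw [← mul_assoc, mul_comm c r, hrc, one_mul]
    linarith
  set K : ℕ := S.card with hKdef
  by_cases hK2 : K < 2
  · -- small code case
    have hK1 : (K:ℝ) ≤ 1 := by exact_mod_cast Nat.lt_succ_iff.mp hK2
    have hK0 : (0:ℝ) ≤ K := Nat.cast_nonneg K
    have hEle : (w:ℝ)^2 - 2*(r*n)*w + (r*n)*dd ≤ (r*n)*dd := by nlinarith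
    nlinarith
  push_neg at hK2
  have hK2' : (2:ℝ) ≤ K := by exact_mod_cast hK2
  have hKpos : (0:ℝ) < K := by linarith
  -- coordinate value counts
  set na : Fin n → F → ℕ := fun i a => (S.filter fun x => x i = a).card with hnadef
  set tn : Fin n → ℕ := fun i => (S.filter fun x => ¬ x i = z i).card with htndef
  have h_na_sum : ∀ i, ∑ a : F, na i a = K :=
    fun i => (Finset.card_eq_sum_card_fiberwise
      (f := fun x : Fin n → F => x i) (t := univ) (fun x _ => mem_univ _)).symm
  have h_pair : ∀ i : Fin n,
      ∑ x ∈ S, ∑ y ∈ S, (if x i = y i then 1 else 0 : ℕ) = ∑ a : F, (na i a)^2 := by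
    intro i
    have h1 : ∀ x ∈ S, ∑ y ∈ S, (if x i = y i then 1 else 0 : ℕ) = na i (x i) := by
      intro x _
      rw [← Finset.card_filter]
      exact congrArg Finset.card (Finset.filter_congr fun y _ => by simp [eq_comm])
    calc ∑ x ∈ S, ∑ y ∈ S, (if x i = y i then 1 else 0 : ℕ)
        = ∑ x ∈ S, na i (x i) := Finset.sum_congr rfl h1
      _ = ∑ a : F, ∑ x ∈ S.filter (fun x => x i = a), na i (x i) :=
          (Finset.sum_fiberwise_of_maps_to (fun x _ => mem_univ _) _).symm
      _ = ∑ a : F, (na i a)^2 := by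
          refine Finset.sum_congr rfl fun a _ => ?_
          rw [Finset.sum_congr rfl (fun x hx => by rw [(mem_filter.mp hx).2]),
            Finset.sum_const, smul_eq_mul, sq]
  have h_split : ∀ i, na i (z i) + tn i = K := by
    intro i
    exact Finset.card_filter_add_card_filter_not (s := S) (p := fun x => x i = z i)
  -- total distance to center
  have hTn : ∑ i : Fin n, tn i = ∑ x ∈ S, hamd x z := by
    simp only [htndef, Finset.card_filter, hamd_eq_sum]
    rw [Finset.sum_comm]
  have hT_le : ∑ i : Fin n, tn i ≤ K * w := by
    rw [hTn]
    calc ∑ x ∈ S, hamd x z ≤ ∑ x ∈ S, w := Finset.sum_le_sum hball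
      _ = K * w := by rw [Finset.sum_const, smul_eq_mul]
  -- the total pairwise distance
  set D : ℕ := ∑ x ∈ S, ∑ y ∈ S, hamd x y with hDdef
  have hDlow : K * (K - 1) * dd ≤ D := by
    have hx : ∀ x ∈ S, (K - 1) * dd ≤ ∑ y ∈ S, hamd x y := by
      intro x hxS
      calc (K - 1) * dd = ∑ _y ∈ S.erase x, dd := by
            rw [Finset.sum_const, smul_eq_mul, card_erase_of_mem hxS]
        _ ≤ ∑ y ∈ S.erase x, hamd x y :=
            Finset.sum_le_sum fun y hy =>
              hdist x hxS y (mem_of_mem_erase hy) (fun h => (mem_erase.mp hy).1 h.symm)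
        _ ≤ ∑ y ∈ S, hamd x y :=
            Finset.sum_le_sum_of_subset (erase_subset _ _)
    calc K * (K-1) * dd = ∑ _x ∈ S, (K-1)*dd := by
          rw [Finset.sum_const, smul_eq_mul, mul_assoc]
      _ ≤ D := Finset.sum_le_sum hx
  -- real versions
  set t : Fin n → ℝ := fun i => (tn i : ℝ) with htdef
  set T : ℝ := ∑ i : Fin n, t i with hTdef
  have hT0 : 0 ≤ T := Finset.sum_nonneg fun i _ => Nat.cast_nonneg _
  have hTw : T ≤ K * w := by
    have h1 : ((∑ i : Fin n, tn i : ℕ) : ℝ) ≤ ((K * w : ℕ) : ℝ) := by exact_mod_cast hT_le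
    push_cast at h1
    simpa [hTdef, htdef] using h1
  -- real version of h_pair
  have h_pairR : ∀ i : Fin n,
      ∑ x ∈ S, ∑ y ∈ S, (if x i = y i then (1:ℝ) else 0) = ∑ a : F, (na i a : ℝ)^2 := by
    intro i
    have h := h_pair i
    calc ∑ x ∈ S, ∑ y ∈ S, (if x i = y i then (1:ℝ) else 0)
        = ((∑ x ∈ S, ∑ y ∈ S, (if x i = y i then 1 else 0 : ℕ) : ℕ) : ℝ) := by
          push_cast; rfl
      _ = ∑ a : F, (na i a : ℝ)^2 := by rw [h]; push_cast; rfl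
  -- D = Σ_i (K² - Σ_a na²)
  have hD_eq : (D:ℝ) = ∑ i : Fin n, ((K:ℝ)^2 - ∑ a : F, (na i a : ℝ)^2) := by
    have e1 : (D:ℝ) = ∑ x ∈ S, ∑ y ∈ S, ∑ i : Fin n, (if x i ≠ y i then (1:ℝ) else 0) := by
      simp only [hDdef, hamd_eq_sum]
      push_cast
      rfl
    have e2 : ∑ x ∈ S, ∑ y ∈ S, ∑ i : Fin n, (if x i ≠ y i then (1:ℝ) else 0)
        = ∑ i : Fin n, ∑ x ∈ S, ∑ y ∈ S, (if x i ≠ y i then (1:ℝ) else 0) := by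
      calc ∑ x ∈ S, ∑ y ∈ S, ∑ i : Fin n, (if x i ≠ y i then (1:ℝ) else 0)
          = ∑ x ∈ S, ∑ i : Fin n, ∑ y ∈ S, (if x i ≠ y i then (1:ℝ) else 0) :=
            Finset.sum_congr rfl fun x _ => Finset.sum_comm
        _ = ∑ i : Fin n, ∑ x ∈ S, ∑ y ∈ S, (if x i ≠ y i then (1:ℝ) else 0) :=
            Finset.sum_comm
    rw [e1, e2]
    refine Finset.sum_congr rfl fun i _ => ?_
    have key : ∀ x y : Fin n → F,
        (if x i ≠ y i then (1:ℝ) else 0) = 1 - (if x i = y i then (1:ℝ) else 0) := by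
      intro x y; by_cases h : x i = y i <;> simp [h]
    simp only [key, Finset.sum_sub_distrib, Finset.sum_const, smul_eq_mul, mul_one]
    rw [h_pairR i]
    have : (S.card : ℝ) = (K : ℝ) := by rw [hKdef]
    rw [this]; ring
  -- Cauchy-Schwarz per coordinate
  have hCauchy : ∀ i : Fin n, (K:ℝ)^2 - ∑ a : F, (na i a : ℝ)^2
      ≤ 2*(K:ℝ)*(t i) - c*(t i)^2 := by
    intro i
    have hmem : z i ∈ (univ : Finset F) := mem_univ _
    have hsplit : (na i (z i) : ℝ) = (K:ℝ) - t i := by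
      have h' : (na i (z i) : ℝ) + (tn i : ℝ) = (K:ℝ) := by exact_mod_cast h_split i
      simp only [htdef]; linarith
    have hesum : ∑ a ∈ univ.erase (z i), (na i a : ℝ) = t i := by
      have h1 : (na i (z i) : ℝ) + ∑ a ∈ univ.erase (z i), (na i a : ℝ)
          = ∑ a : F, (na i a : ℝ) :=
            Finset.add_sum_erase _ (fun a => (na i a : ℝ)) hmem
      have h2 : ∑ a : F, (na i a : ℝ) = (K:ℝ) := by exact_mod_cast h_na_sum i
      linarith [hsplit]
    have hCS : (t i)^2 ≤ (Q - 1) * ∑ a ∈ univ.erase (z i), (na i a : ℝ)^2 := by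
      have := Finset.sum_mul_sq_le_sq_mul_sq (univ.erase (z i))
        (fun _ => (1:ℝ)) (fun a => (na i a : ℝ))
      simp only [one_mul, one_pow] at this
      rw [hesum] at this
      have hcard : ((univ.erase (z i)).card : ℝ) = Q - 1 := by
        rw [Finset.card_erase_of_mem hmem, Finset.card_univ]
        have : 1 ≤ Fintype.card F := by omega
        push_cast [Nat.cast_sub this]
        simp [hQdef]
      calc (t i)^2 ≤ (∑ _a ∈ univ.erase (z i), (1:ℝ)) * ∑ a ∈ univ.erase (z i), (na i a : ℝ)^2 := this
        _ = (Q - 1) * ∑ a ∈ univ.erase (z i), (na i a : ℝ)^2 := by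
            rw [Finset.sum_const, nsmul_eq_mul, mul_one, hcard]
    have hsumsq : ∑ a : F, (na i a : ℝ)^2
        = (na i (z i) : ℝ)^2 + ∑ a ∈ univ.erase (z i), (na i a : ℝ)^2 :=
      (Finset.add_sum_erase _ (fun a => (na i a : ℝ)^2) hmem).symm
    have hc1 : (c - 1) * (Q - 1) = 1 := by
      simp only [hcdef]; field_simp; ring
    have hc1' : 0 ≤ c - 1 := by
      have h1 : (1:ℝ) ≤ Q/(Q-1) := by rw [le_div_iff₀ hQm1]; linarith
      simp only [hcdef]; linarith
    have hkey : (c - 1) * (t i)^2 ≤ ∑ a ∈ univ.erase (z i), (na i a : ℝ)^2 := by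
      have e : (c-1)*((Q-1) * ∑ a ∈ univ.erase (z i), (na i a : ℝ)^2)
          = ∑ a ∈ univ.erase (z i), (na i a : ℝ)^2 := by rw [← mul_assoc, hc1, one_mul]
      have h2 := mul_le_mul_of_nonneg_left hCS hc1'
      linarith
    rw [hsumsq, hsplit]
    linarith [hkey]
  -- sum up
  have hD_up : (D:ℝ) ≤ 2*(K:ℝ)*T - c * ∑ i : Fin n, (t i)^2 := by
    rw [hD_eq]
    calc ∑ i : Fin n, ((K:ℝ)^2 - ∑ a : F, (na i a : ℝ)^2)
        ≤ ∑ i : Fin n, (2*(K:ℝ)*(t i) - c*(t i)^2) := Finset.sum_le_sum fun i _ => hCauchy i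
      _ = 2*(K:ℝ)*T - c * ∑ i : Fin n, (t i)^2 := by
          rw [Finset.sum_sub_distrib, ← Finset.mul_sum, ← Finset.mul_sum, hTdef]
  have hCau2 : T^2 ≤ (n:ℝ) * ∑ i : Fin n, (t i)^2 := by
    have := Finset.sum_mul_sq_le_sq_mul_sq (univ : Finset (Fin n))
      (fun _ => (1:ℝ)) t
    simp only [one_mul, one_pow, Finset.sum_const, nsmul_eq_mul, mul_one,
      Finset.card_univ, Fintype.card_fin] at this
    rw [← hTdef] at this
    exact this
  -- main chain
  have hDlowR : (K:ℝ) * ((K:ℝ) - 1) * dd ≤ (D:ℝ) := by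
    have h1 : ((K * (K-1) * dd : ℕ) : ℝ) ≤ (D:ℝ) := by exact_mod_cast hDlow
    have h2 : ((K - 1 : ℕ) : ℝ) = (K:ℝ) - 1 := by
      have : 1 ≤ K := by omega
      push_cast [Nat.cast_sub this]; ring
    push_cast at h1
    rw [h2] at h1
    linarith
  have hsumt2 : 0 ≤ ∑ i : Fin n, (t i)^2 := Finset.sum_nonneg fun i _ => sq_nonneg _
  have hnpos : (0:ℝ) < n := by linarith
  have h_ii : (K:ℝ) * ((K:ℝ) - 1) * dd * n ≤ 2*(K:ℝ)^2*w*n - c*(K:ℝ)^2*w^2 := by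
    have hDn : (D:ℝ) * n ≤ 2*(K:ℝ)*T*n - c*T^2 := by
      have h1 : (D:ℝ) * n ≤ (2*(K:ℝ)*T - c * ∑ i : Fin n, (t i)^2) * n :=
        mul_le_mul_of_nonneg_right hD_up hnpos.le
      have h2 := mul_le_mul_of_nonneg_left hCau2 hcpos.le
      nlinarith [h1, h2]
    have h_cT : c*T ≤ c*((K:ℝ)*w) := mul_le_mul_of_nonneg_left hTw hcpos.le
    have h_cKw : c*((K:ℝ)*w) ≤ (K:ℝ)*n := by
      have := mul_le_mul_of_nonneg_left hcw hKpos.le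
      nlinarith
    have hmono : 2*(K:ℝ)*T*n - c*T^2 ≤ 2*(K:ℝ)^2*w*n - c*(K:ℝ)^2*w^2 := by
      nlinarith [mul_nonneg (sub_nonneg.mpr hTw) (show (0:ℝ) ≤ 2*(K:ℝ)*n - (c*((K:ℝ)*w) + c*T) by linarith)]
    have := mul_le_mul_of_nonneg_right hDlowR hnpos.le
    linarith
  -- cancel K
  have h5 : ((K:ℝ) - 1) * dd * n ≤ 2*(K:ℝ)*w*n - c*(K:ℝ)*w^2 := by
    have h6 : (K:ℝ) * (((K:ℝ) - 1) * dd * n) ≤ (K:ℝ) * (2*(K:ℝ)*w*n - c*(K:ℝ)*w^2) := by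
      nlinarith [h_ii, sq_nonneg ((K:ℝ))]
    exact le_of_mul_le_mul_left h6 hKpos
  -- conclude
  have hρc : (r * n) * c = n := by
    rw [mul_comm r (n:ℝ), mul_assoc, hrc, mul_one]
  have hfinal : c * ((K:ℝ) * ((w:ℝ)^2 - 2*(r*n)*w + (r*n)*dd)) ≤ c * ((r*n) * dd) := by
    have e3 : c * ((K:ℝ) * ((w:ℝ)^2 - 2*(r*n)*w + (r*n)*dd))
        = (K:ℝ)*c*w^2 - 2*(K:ℝ)*w*((r*n)*c) + (K:ℝ)*dd*((r*n)*c) := by ring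
    have e4 : c * ((r*n) * dd) = (dd:ℝ) * ((r*n)*c) := by ring
    rw [e3, e4, hρc]
    nlinarith [h5]
  exact le_of_mul_le_mul_left hfinal hcpos

lemma hamd_comm {n : ℕ} (x y : Fin n → F) : hamd x y = hamd y x :=
  congrArg Finset.card (Finset.filter_congr fun i _ => by rw [ne_comm])

lemma exists_good_center {n w : ℕ} [Nonempty F] (C : Finset (Fin n → F)) :
    ∃ z : Fin n → F,
      C.card * (∑ i ∈ range (w+1), n.choose i * (Fintype.card F - 1)^i)
        ≤ (C.filter fun x => hamd x z ≤ w).card * (Fintype.card F)^n := by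
  classical
  set V := ∑ i ∈ range (w+1), n.choose i * (Fintype.card F - 1)^i with hV
  have hsum : ∑ z : Fin n → F, (C.filter fun x => hamd x z ≤ w).card = C.card * V := by
    calc ∑ z : Fin n → F, (C.filter fun x => hamd x z ≤ w).card
        = ∑ z : Fin n → F, ∑ x ∈ C, (if hamd x z ≤ w then 1 else 0) := by
          simp_rw [Finset.card_filter]
      _ = ∑ x ∈ C, ∑ z : Fin n → F, (if hamd x z ≤ w then 1 else 0) := Finset.sum_comm
      _ = ∑ x ∈ C, ((univ : Finset (Fin n → F)).filter fun z => hamd x z ≤ w).card := by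
          simp_rw [Finset.card_filter]
      _ = ∑ _x ∈ C, V := by
          refine Finset.sum_congr rfl fun x _ => ?_
          rw [show ((univ : Finset (Fin n → F)).filter fun z => hamd x z ≤ w)
              = ((univ : Finset (Fin n → F)).filter fun z => hamd z x ≤ w) from
            Finset.filter_congr fun z _ => by rw [hamd_comm], card_ball, hV]
      _ = C.card * V := by rw [Finset.sum_const, smul_eq_mul]
  obtain ⟨z, _, hzmax⟩ := Finset.exists_max_image (univ : Finset (Fin n → F))
    (fun z => (C.filter fun x => hamd x z ≤ w).card) ⟨Classical.arbitrary _, mem_univ _⟩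
  refine ⟨z, ?_⟩
  calc C.card * V = ∑ z : Fin n → F, (C.filter fun x => hamd x z ≤ w).card := hsum.symm
    _ ≤ (univ : Finset (Fin n → F)).card •
          (C.filter fun x => hamd x z ≤ w).card :=
        Finset.sum_le_card_nsmul _ _ _ (fun z' _ => hzmax z' (mem_univ _))
    _ = (C.filter fun x => hamd x z ≤ w).card * (Fintype.card F)^n := by
        rw [smul_eq_mul, Finset.card_univ, mul_comm]
        congr 1
        simp [Fintype.card_fun]

section Embedding

variable {Fq : Type*} [Field Fq] [Fintype Fq] [DecidableEq Fq] {n : ℕ}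

def phi (b : ℕ) (x : Fin n → Fq) : Fin n → (Fin b → Fq) :=
  fun i j => cget x ((i : ℕ) + (j : ℕ))

lemma cget_sub (x y : Fin n → Fq) (k : ℕ) : cget (x - y) k = cget x k - cget y k := by
  unfold cget
  split
  · simp
  · rfl

lemma phi_inj {b : ℕ} (hb : 1 ≤ b) : Function.Injective (phi (n := n) (Fq := Fq) b) := by
  intro x y h
  funext i
  have h2 := congrFun (congrFun h i) ⟨0, hb⟩
  have hn : ¬ (n = 0) := by rintro rfl; exact absurd i.2 (by omega)
  simpa [phi, cget, hn, Nat.mod_eq_of_lt i.2, Fin.eta] using h2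

lemma hamd_phi {b : ℕ} (x y : Fin n → Fq) : hamd (phi b x) (phi b y) = db b x y := by
  unfold hamd db wtb
  rw [Finset.card_filter, Finset.card_filter,
    ← Fin.sum_univ_eq_sum_range
      (fun i => if (∃ j : Fin b, cget (x - y) (i + (j : ℕ)) ≠ 0) then 1 else 0) n]
  refine Finset.sum_congr rfl fun i _ => ?_
  refine if_congr ?_ rfl rfl
  simp only [phi, ne_eq, funext_iff, not_forall]
  constructor
  · rintro ⟨j, hj⟩
    exact ⟨j, by rw [cget_sub]; exact sub_ne_zero.mpr hj⟩
  · rintro ⟨j, hj⟩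
    rw [cget_sub] at hj
    exact ⟨j, sub_ne_zero.mp hj⟩

end Embedding

end Aux

/-- Corollary 4.10 (Elias bound for the `b`-symbol distance): with `r = 1 - q^{-b}`,
if `w ≤ r n` and `w² - 2 r n w + r n d > 0` then
`A_b(n,d,q) ≤ (r n d / (w² - 2 r n w + r n d)) · q^{bn} / Σ_{i=0}^{w} C(n,i)(q^b-1)^i`. -/
theorem elias_bound {Fq : Type*} [Field Fq] [Fintype Fq] [DecidableEq Fq]
    {n d b w : ℕ} (hb1 : 1 ≤ b) (hbn : b ≤ n) (hd : 1 ≤ d) (hdn : d ≤ n)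
    (hw : (w : ℝ) ≤ (1 - ((Fintype.card Fq : ℝ) ^ b)⁻¹) * n)
    (hpos : 0 < (w : ℝ) ^ 2 - 2 * ((1 - ((Fintype.card Fq : ℝ) ^ b)⁻¹) * n) * w
        + ((1 - ((Fintype.card Fq : ℝ) ^ b)⁻¹) * n) * d) :
    (Asize Fq n b d : ℝ) ≤
      (((1 - ((Fintype.card Fq : ℝ) ^ b)⁻¹) * n) * d /
          ((w : ℝ) ^ 2 - 2 * ((1 - ((Fintype.card Fq : ℝ) ^ b)⁻¹) * n) * w
            + ((1 - ((Fintype.card Fq : ℝ) ^ b)⁻¹) * n) * d)) *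
        ((Fintype.card Fq : ℝ) ^ (b * n) /
          ∑ i ∈ Finset.range (w + 1),
            (n.choose i : ℝ) * ((Fintype.card Fq : ℝ) ^ b - 1) ^ i) := by
  classical
  have hn : 0 < n := le_trans hb1 hbn
  have hq2 : 2 ≤ Fintype.card Fq := Fintype.one_lt_card
  have hcardF : Fintype.card (Fin b → Fq) = (Fintype.card Fq) ^ b := by
    simp [Fintype.card_fun]
  have hQ : 2 ≤ Fintype.card (Fin b → Fq) := by
    rw [hcardF]
    calc 2 ≤ Fintype.card Fq := hq2
      _ ≤ (Fintype.card Fq) ^ b := Nat.le_self_pow (by omega) _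
  have hcF : ((Fintype.card (Fin b → Fq) : ℕ) : ℝ) = ((Fintype.card Fq : ℝ)) ^ b := by
    rw [hcardF]; push_cast; rfl
  -- the optimal code
  have hne : {M | ∃ C : Finset (Fin n → Fq),
      (∀ x ∈ C, ∀ y ∈ C, x ≠ y → d ≤ db b x y) ∧ C.card = M}.Nonempty :=
    ⟨0, ∅, by simp⟩
  have hbdd : BddAbove {M | ∃ C : Finset (Fin n → Fq),
      (∀ x ∈ C, ∀ y ∈ C, x ≠ y → d ≤ db b x y) ∧ C.card = M} := by
    refine ⟨Fintype.card (Fin n → Fq), fun M hM => ?_⟩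
    obtain ⟨C, _, rfl⟩ := hM
    exact Finset.card_le_univ C
  have hmem : Asize Fq n b d ∈ {M | ∃ C : Finset (Fin n → Fq),
      (∀ x ∈ C, ∀ y ∈ C, x ≠ y → d ≤ db b x y) ∧ C.card = M} := Nat.sSup_mem hne hbdd
  obtain ⟨C, hCdist, hCcard⟩ := hmem
  rw [← hCcard]
  -- image code
  set C' : Finset (Fin n → (Fin b → Fq)) := C.image (phi b) with hC'
  have hC'card : C'.card = C.card := Finset.card_image_of_injective _ (phi_inj hb1)
  have hC'dist : ∀ u ∈ C', ∀ v ∈ C', u ≠ v → d ≤ hamd u v := by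
    intro u hu v hv huv
    obtain ⟨x, hx, rfl⟩ := Finset.mem_image.mp hu
    obtain ⟨y, hy, rfl⟩ := Finset.mem_image.mp hv
    rw [hamd_phi]
    exact hCdist x hx y hy (fun h => huv (by rw [h]))
  -- averaging
  obtain ⟨z, hz⟩ := exists_good_center (w := w) C'
  set Sb : Finset (Fin n → (Fin b → Fq)) := C'.filter (fun x => hamd x z ≤ w) with hSb
  -- core bound
  have hw' : (w : ℝ) ≤ (1 - ((Fintype.card (Fin b → Fq) : ℝ))⁻¹) * n := by
    rw [hcF]; exact hw
  have hE' : 0 ≤ (w:ℝ)^2 - 2*((1 - (Fintype.card (Fin b → Fq):ℝ)⁻¹)*n)*w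
      + ((1 - (Fintype.card (Fin b → Fq):ℝ)⁻¹)*n)*d := by
    rw [hcF]; linarith [hpos]
  have hcore := elias_core hn hQ Sb z
    (fun x hx => (Finset.mem_filter.mp hx).2)
    (fun x hx y hy hxy =>
      hC'dist x (Finset.mem_filter.mp hx).1 y (Finset.mem_filter.mp hy).1 hxy)
    hw' hE'
  rw [hcF] at hcore
  -- notation
  set ρ : ℝ := (1 - ((Fintype.card Fq : ℝ) ^ b)⁻¹) * n with hρ
  set E : ℝ := (w : ℝ) ^ 2 - 2 * ρ * w + ρ * d with hEdef
  set Vn : ℕ := ∑ i ∈ Finset.range (w + 1),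
    n.choose i * (Fintype.card (Fin b → Fq) - 1) ^ i with hVn
  set Vr : ℝ := ∑ i ∈ Finset.range (w + 1),
    (n.choose i : ℝ) * ((Fintype.card Fq : ℝ) ^ b - 1) ^ i with hVr
  have hVcast : (Vn : ℝ) = Vr := by
    rw [hVn, hVr]
    push_cast [Nat.cast_sub (show 1 ≤ Fintype.card (Fin b → Fq) by omega)]
    rw [hcF]
  have hQb2 : (2:ℝ) ≤ (Fintype.card Fq : ℝ) ^ b := by
    rw [← hcF]; exact_mod_cast hQ
  have hVr1 : (1:ℝ) ≤ Vr := by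
    rw [hVr]
    have h0 : (0:ℕ) ∈ Finset.range (w + 1) := Finset.mem_range.mpr (by omega)
    have hX : (0:ℝ) ≤ (Fintype.card Fq : ℝ) ^ b - 1 := by linarith [hQb2]
    calc (1:ℝ) = (n.choose 0 : ℝ) * ((Fintype.card Fq : ℝ) ^ b - 1) ^ 0 := by norm_num
      _ ≤ _ := Finset.single_le_sum
          (f := fun i => (n.choose i : ℝ) * ((Fintype.card Fq : ℝ) ^ b - 1) ^ i)
          (fun i _ => mul_nonneg (Nat.cast_nonneg _) (pow_nonneg hX i)) h0
  have hQN : ((Fintype.card (Fin b → Fq) : ℝ)) ^ n = (Fintype.card Fq : ℝ) ^ (b * n) := by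
    rw [hcF, ← pow_mul]
  -- cast averaging inequality
  have hA : (C.card : ℝ) * Vr ≤ (Sb.card : ℝ) * (Fintype.card Fq : ℝ) ^ (b * n) := by
    have h1 : ((C'.card * Vn : ℕ) : ℝ) ≤ ((Sb.card * (Fintype.card (Fin b → Fq))^n : ℕ) : ℝ) := by
      exact_mod_cast hz
    push_cast at h1
    rw [hC'card] at h1  -- might fail on cast form
    calc (C.card : ℝ) * Vr = (C.card : ℝ) * (Vn : ℝ) := by rw [hVcast]
      _ ≤ (Sb.card : ℝ) * ((Fintype.card (Fin b → Fq) : ℝ))^n := h1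
      _ = (Sb.card : ℝ) * (Fintype.card Fq : ℝ) ^ (b * n) := by rw [hQN]
  have hB : (Sb.card : ℝ) * E ≤ ρ * d := hcore
  have hE0 : 0 < E := by rw [hEdef, hρ]; exact hpos
  have hQN0 : (0:ℝ) ≤ (Fintype.card Fq : ℝ) ^ (b * n) := by positivity
  -- final computation
  rw [div_mul_div_comm, le_div_iff₀ (by positivity : (0:ℝ) < E * Vr)]
  nlinarith [mul_le_mul_of_nonneg_right hA hE0.le,
    mul_le_mul_of_nonneg_right hB hQN0]
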